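/- Given h ∈ H(T) with (A h)(x,x*) and ((A h)* ∘ i)(x,x*) both finite, and ε > 0, for n > 1 + log₂((A h)(x,x*) - ((A h)* ∘ i)(x,x*)) - log₂ ε one has (Aⁿ h)(x,x*) - ε ≤ (A^∞ h)(x,x*) ≤ (Aⁿ h)(x,x*). -/

import Mathlib

open NormedSpace

noncomputable section

/-- Convexity for extended-real-valued functions. -/
def EConvexOn {E : Type*} [AddCommMonoid E] [Module ℝ E] (f : E → EReal) : Prop :=
  ∀ x y : E, ∀ a b : ℝ, 0 ≤ a → 0 ≤ b → a + b = 1 →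
    f (a • x + b • y) ≤ (a : EReal) * f x + (b : EReal) * f y

/-- Properness: somewhere finite and never `⊥` (i.e. values in `ℝ ∪ {+∞}`). -/
def EProper {E : Type*} (f : E → EReal) : Prop :=
  (∃ x, f x ≠ ⊤) ∧ ∀ x, f x ≠ ⊥

variable {X : Type*} [NormedAddCommGroup X] [NormedSpace ℝ X]

/-- The ε-subdifferential of `f : X → ℝ ∪ {+∞}` at `x`. -/
def epsSubdiff (f : X → EReal) (ε : ℝ) (x : X) : Set (StrongDual ℝ X) :=
  {p | f x ≠ ⊤ ∧ ∀ y : X, f x + ((p (y - x) : ℝ) : EReal) ≤ f y + (ε : EReal)}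

/-- The Fenchel conjugate of `f : X → ℝ ∪ {+∞}`. -/
def fconj (f : X → EReal) (p : StrongDual ℝ X) : EReal :=
  ⨆ y : X, ((p y : ℝ) : EReal) - f y

/-- The duality pairing `⟨x, x*⟩` on `X × X*`. -/
def pairing (z : X × StrongDual ℝ X) : ℝ := z.2 z.1

/-- `h* ∘ i`, the conjugate of `h : X × X* → ℝ ∪ {+∞}` with respect to the pairing
`⟨(x,x*),(y*,y)⟩ = ⟨x,y*⟩ + ⟨y,x*⟩`, composed with the swap `i(x,x*) = (x*,x)`. -/
def conjI (h : X × StrongDual ℝ X → EReal) (z : X × StrongDual ℝ X) : EReal :=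
  ⨆ w : X × StrongDual ℝ X, ((z.2 w.1 + w.2 z.1 : ℝ) : EReal) - h w

/-- The averaging map `A h := (1/2)(h + h* ∘ i)`. -/
def Amap (h : X × StrongDual ℝ X → EReal) : X × StrongDual ℝ X → EReal :=
  fun z => (((1 : ℝ)/2 : ℝ) : EReal) * (h z + conjI h z)

/-- Monotone multivalued operator `T : X ⇉ X*`. -/
def IsMonotoneOp (T : X → Set (StrongDual ℝ X)) : Prop :=
  ∀ ⦃x p y q⦄, p ∈ T x → q ∈ T y → 0 ≤ (p - q) (x - y)

/-- Maximally monotone operator. -/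
def IsMaxMonotoneOp (T : X → Set (StrongDual ℝ X)) : Prop :=
  IsMonotoneOp T ∧ ∀ x p, (∀ y q, q ∈ T y → 0 ≤ (p - q) (x - y)) → p ∈ T x

/-- The Fitzpatrick family `H(T)`: lsc convex `h ≥ ⟨·,·⟩` with equality on `gph T`. -/
def InFitzFamily (T : X → Set (StrongDual ℝ X)) (h : X × StrongDual ℝ X → EReal) : Prop :=
  LowerSemicontinuous h ∧ EConvexOn h ∧ (∀ z, (pairing z : EReal) ≤ h z) ∧
    ∀ x p, p ∈ T x → h (x, p) = (pairing (x, p) : EReal)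

/-- The δ-subdifferential of `h : X × X* → ℝ ∪ {+∞}` with respect to the pairing
`⟨(x,x*),(y*,y)⟩ = ⟨x,y*⟩ + ⟨y,x*⟩`. -/
def epsSubdiff2 (h : X × StrongDual ℝ X → EReal) (δ : ℝ) (z : X × StrongDual ℝ X) :
    Set (StrongDual ℝ X × X) :=
  {w | h z ≠ ⊤ ∧ ∀ u : X × StrongDual ℝ X,
    h z + ((w.1 (u.1 - z.1) + (u.2 - z.2) w.2 : ℝ) : EReal) ≤ h u + (δ : EReal)}

/-- The Fenchel–Young function `f^{FY}(x,x*) = f(x) + f*(x*)`. -/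
def FYfn (f : X → EReal) (z : X × StrongDual ℝ X) : EReal := f z.1 + fconj f z.2

/-- The pointwise limit `A^∞ h` of the non-increasing sequence `{Aⁿh}_{n ≥ 1}`,
realized as a pointwise infimum. -/
def AinfMap (h : X × StrongDual ℝ X → EReal) (z : X × StrongDual ℝ X) : EReal :=
  ⨅ n : ℕ, Amap^[n + 1] h z

private lemma conjI_mono' {h₁ h₂ : X × StrongDual ℝ X → EReal} (hle : ∀ x, h₁ x ≤ h₂ x)
    (z : X × StrongDual ℝ X) : conjI h₂ z ≤ conjI h₁ z :=
  iSup_mono fun w => EReal.sub_le_sub le_rfl (hle w)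

private lemma conjI_ne_bot' {h : X × StrongDual ℝ X → EReal} {x₀ : X × StrongDual ℝ X} (hx₀ : h x₀ ≠ ⊤)
    (z : X × StrongDual ℝ X) : conjI h z ≠ ⊥ := by
  intro hc
  have h1 : ((z.2 x₀.1 + x₀.2 z.1 : ℝ) : EReal) - h x₀ ≤ conjI h z :=
    le_iSup (fun w => ((z.2 w.1 + w.2 z.1 : ℝ) : EReal) - h w) x₀
  rw [hc, le_bot_iff] at h1
  by_cases hB : h x₀ = ⊥
  · rw [hB, EReal.coe_sub_bot] at h1; exact top_ne_bot h1
  · lift h x₀ to ℝ using ⟨hx₀, hB⟩ with r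
    rw [← EReal.coe_sub] at h1
    exact EReal.coe_ne_bot _ h1

private lemma half_ne_bot' {s : EReal} (hs : s ≠ ⊥) : (((1:ℝ)/2 : ℝ) : EReal) * s ≠ ⊥ := by
  induction s with
  | bot => exact absurd rfl hs
  | coe r => rw [← EReal.coe_mul]; exact EReal.coe_ne_bot _
  | top => rw [EReal.coe_mul_top_of_pos (by norm_num)]; exact top_ne_bot

private lemma Amap_ne_bot' {h : X × StrongDual ℝ X → EReal} (hbot : ∀ x, h x ≠ ⊥)
    {x₀ : X × StrongDual ℝ X} (hx₀ : h x₀ ≠ ⊤) (x : X × StrongDual ℝ X) : Amap h x ≠ ⊥ := by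
  refine half_ne_bot' ?_
  rw [Ne, EReal.add_eq_bot_iff]
  push_neg
  exact ⟨hbot x, conjI_ne_bot' hx₀ x⟩

private lemma half_add_le' {x y : EReal} (hyx : y ≤ x) :
    (((1:ℝ)/2 : ℝ) : EReal) * (x + y) ≤ x := by
  induction x with
  | bot =>
    rw [le_bot_iff] at hyx
    rw [hyx, EReal.add_bot, EReal.coe_mul_bot_of_pos (by norm_num)]
  | coe r =>
    induction y with
    | bot => rw [EReal.add_bot, EReal.coe_mul_bot_of_pos (by norm_num)]; exact bot_le
    | coe s =>
      rw [← EReal.coe_add, ← EReal.coe_mul, EReal.coe_le_coe_iff]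
      rw [EReal.coe_le_coe_iff] at hyx
      linarith
    | top => exact absurd hyx (by simp)
  | top => exact le_top

private lemma conjI_Amap_le' {h : X × StrongDual ℝ X → EReal} (hbot : ∀ x, h x ≠ ⊥)
    {x₀ : X × StrongDual ℝ X} (hx₀ : h x₀ ≠ ⊤) (z : X × StrongDual ℝ X) :
    conjI (Amap h) z ≤ Amap h z := by
  have hcb : ∀ u, conjI h u ≠ ⊥ := conjI_ne_bot' hx₀
  refine iSup_le fun w => ?_
  by_cases hwt : h w = ⊤
  · have h1 : Amap h w = ⊤ := by
      show (((1:ℝ)/2 : ℝ) : EReal) * (h w + conjI h w) = ⊤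
      rw [hwt, EReal.top_add_of_ne_bot (hcb w), EReal.coe_mul_top_of_pos (by norm_num)]
    rw [h1, EReal.sub_top]; exact bot_le
  by_cases hct : conjI h w = ⊤
  · have h1 : Amap h w = ⊤ := by
      show (((1:ℝ)/2 : ℝ) : EReal) * (h w + conjI h w) = ⊤
      rw [hct, EReal.add_top_of_ne_bot (hbot w), EReal.coe_mul_top_of_pos (by norm_num)]
    rw [h1, EReal.sub_top]; exact bot_le
  obtain ⟨rw', hrw⟩ : ∃ r : ℝ, h w = (r : EReal) :=
    ⟨(h w).toReal, (EReal.coe_toReal hwt (hbot w)).symm⟩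
  obtain ⟨cw, hcw⟩ : ∃ r : ℝ, conjI h w = (r : EReal) :=
    ⟨(conjI h w).toReal, (EReal.coe_toReal hct (hcb w)).symm⟩
  have hAw : Amap h w = (((rw' + cw)/2 : ℝ) : EReal) := by
    show (((1:ℝ)/2 : ℝ) : EReal) * (h w + conjI h w) = _
    rw [hrw, hcw, ← EReal.coe_add, ← EReal.coe_mul, EReal.coe_eq_coe_iff]; ring
  rw [hAw, ← EReal.coe_sub]
  -- RHS cases
  by_cases hzt : h z = ⊤
  · have h1 : Amap h z = ⊤ := by
      show (((1:ℝ)/2 : ℝ) : EReal) * (h z + conjI h z) = ⊤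
      rw [hzt, EReal.top_add_of_ne_bot (hcb z), EReal.coe_mul_top_of_pos (by norm_num)]
    rw [h1]; exact le_top
  by_cases hczt : conjI h z = ⊤
  · have h1 : Amap h z = ⊤ := by
      show (((1:ℝ)/2 : ℝ) : EReal) * (h z + conjI h z) = ⊤
      rw [hczt, EReal.add_top_of_ne_bot (hbot z), EReal.coe_mul_top_of_pos (by norm_num)]
    rw [h1]; exact le_top
  obtain ⟨rz, hrz⟩ : ∃ r : ℝ, h z = (r : EReal) :=
    ⟨(h z).toReal, (EReal.coe_toReal hzt (hbot z)).symm⟩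
  obtain ⟨cz, hcz⟩ : ∃ r : ℝ, conjI h z = (r : EReal) :=
    ⟨(conjI h z).toReal, (EReal.coe_toReal hczt (hcb z)).symm⟩
  have hAz : Amap h z = (((rz + cz)/2 : ℝ) : EReal) := by
    show (((1:ℝ)/2 : ℝ) : EReal) * (h z + conjI h z) = _
    rw [hrz, hcz, ← EReal.coe_add, ← EReal.coe_mul, EReal.coe_eq_coe_iff]; ring
  rw [hAz, EReal.coe_le_coe_iff]
  -- two Fenchel-Young style inequalities
  have key1 : z.2 w.1 + w.2 z.1 - rw' ≤ cz := by
    have h1 : ((z.2 w.1 + w.2 z.1 : ℝ) : EReal) - h w ≤ conjI h z :=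
      le_iSup (fun u => ((z.2 u.1 + u.2 z.1 : ℝ) : EReal) - h u) w
    rw [hrw, hcz, ← EReal.coe_sub, EReal.coe_le_coe_iff] at h1
    exact h1
  have key2 : w.2 z.1 + z.2 w.1 - rz ≤ cw := by
    have h1 : ((w.2 z.1 + z.2 w.1 : ℝ) : EReal) - h z ≤ conjI h w :=
      le_iSup (fun u => ((w.2 u.1 + u.2 w.1 : ℝ) : EReal) - h u) z
    rw [hrz, hcw, ← EReal.coe_sub, EReal.coe_le_coe_iff] at h1
    exact h1
  linarith

/-- stopping criterion for the iteration `Aⁿh`. -/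
theorem statement13 (T : X → Set (StrongDual ℝ X)) (hT : IsMaxMonotoneOp T)
    (h : X × StrongDual ℝ X → EReal) (hF : InFitzFamily T h) (hproper : EProper h)
    (z : X × StrongDual ℝ X) (a b : ℝ)
    (ha : Amap h z = (a : EReal)) (hb : conjI (Amap h) z = (b : EReal))
    (ε : ℝ) (hε : 0 < ε) (n : ℕ) (hn1 : 1 ≤ n)
    (hn : (n : ℝ) > 1 + Real.logb 2 (a - b) - Real.logb 2 ε) :
    Amap^[n] h z - (ε : EReal) ≤ AinfMap h z ∧ AinfMap h z ≤ Amap^[n] h z := by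

  obtain ⟨⟨x₀, hx₀⟩, hbot⟩ := hproper
  obtain ⟨m0, rfl⟩ : ∃ m0, n = m0 + 1 := ⟨n - 1, (Nat.succ_pred_eq_of_pos hn1).symm⟩
  set G : ℕ → (X × StrongDual ℝ X → EReal) := fun j => Amap^[j] (Amap h) with hG
  have hG0 : G 0 = Amap h := rfl
  have hGsucc : ∀ j, G (j + 1) = Amap (G j) := fun j => by
    simp only [hG, Function.iterate_succ_apply']
  have hIter : ∀ j, Amap^[j + 1] h = G j := fun j => by
    simp only [hG, Function.iterate_succ_apply]
  have hane : (a : EReal) ≠ ⊤ := EReal.coe_ne_top a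
  -- main induction package
  have key : ∀ j, (∀ x, G j x ≠ ⊥) ∧ G j z ≤ (a : EReal) ∧
      (∀ x, conjI (G j) x ≤ G j x) ∧ (∀ x, G (j + 1) x ≤ G j x) := by
    intro j
    induction j with
    | zero =>
      have h1 : ∀ x, G 0 x ≠ ⊥ := fun x => Amap_ne_bot' hbot hx₀ x
      have h3 : ∀ x, conjI (G 0) x ≤ G 0 x := fun x => conjI_Amap_le' hbot hx₀ x
      refine ⟨h1, by rw [hG0, ha], h3, fun x => ?_⟩
      rw [hGsucc 0]
      exact half_add_le' (h3 x)
    | succ j ih =>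
      obtain ⟨h1, h2, h3, h4⟩ := ih
      have hjzt : G j z ≠ ⊤ := ne_top_of_le_ne_top hane h2
      have h1' : ∀ x, G (j + 1) x ≠ ⊥ := by
        rw [hGsucc j]; exact Amap_ne_bot' h1 hjzt
      have h3' : ∀ x, conjI (G (j + 1)) x ≤ G (j + 1) x := by
        rw [hGsucc j]; exact conjI_Amap_le' h1 hjzt
      refine ⟨h1', le_trans (h4 z) h2, h3', fun x => ?_⟩
      rw [hGsucc (j + 1)]
      exact half_add_le' (h3' x)
    -- end
  have hmono : ∀ j k, j ≤ k → ∀ x, G k x ≤ G j x := by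
    intro j k hjk
    induction hjk with
    | refl => exact fun x => le_rfl
    | step hjk ih => exact fun x => le_trans ((key _).2.2.2 x) (ih x)
  have hub : ∀ j, G j z ≤ (a : EReal) := fun j => (key j).2.1
  have hlbc : ∀ j, (b : EReal) ≤ conjI (G j) z := fun j => by
    rw [← hb, ← hG0]
    exact conjI_mono' (fun x => hmono 0 j (Nat.zero_le j) x) z
  have hcub : ∀ j, conjI (G j) z ≤ (a : EReal) :=
    fun j => le_trans ((key j).2.2.1 z) (hub j)
  have hlb : ∀ j, (b : EReal) ≤ G j z := fun j => le_trans (hlbc j) ((key j).2.2.1 z)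
  -- real values
  set α : ℕ → ℝ := fun j => (G j z).toReal with hαdef
  set β : ℕ → ℝ := fun j => (conjI (G j) z).toReal with hβdef
  have hα : ∀ j, (α j : EReal) = G j z := fun j =>
    EReal.coe_toReal (ne_top_of_le_ne_top hane (hub j)) ((key j).1 z)
  have hβ : ∀ j, (β j : EReal) = conjI (G j) z := fun j =>
    EReal.coe_toReal (ne_top_of_le_ne_top hane (hcub j))
      (fun hc => absurd (hc ▸ hlbc j) (by simp))
  have hβα : ∀ j, β j ≤ α j := fun j => by
    rw [← EReal.coe_le_coe_iff, hα j, hβ j]; exact (key j).2.2.1 z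
  have hαa : ∀ j, α j ≤ a := fun j => by
    rw [← EReal.coe_le_coe_iff, hα j]; exact hub j
  have hbβ : ∀ j, b ≤ β j := fun j => by
    rw [← EReal.coe_le_coe_iff, hβ j]; exact hlbc j
  have hα0 : α 0 = a := by
    rw [← EReal.coe_eq_coe_iff, hα 0, hG0, ha]
  have hβ0 : β 0 = b := by
    rw [← EReal.coe_eq_coe_iff, hβ 0, hG0, hb]
  have hrec : ∀ j, α (j + 1) = (α j + β j) / 2 := by
    intro j
    rw [← EReal.coe_eq_coe_iff, hα (j + 1), hGsucc j]
    show (((1:ℝ)/2 : ℝ) : EReal) * (G j z + conjI (G j) z) = _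
    rw [← hα j, ← hβ j, ← EReal.coe_add, ← EReal.coe_mul, EReal.coe_eq_coe_iff]
    ring
  have hβmono : ∀ j k, j ≤ k → β j ≤ β k := by
    intro j k hjk
    rw [← EReal.coe_le_coe_iff, hβ j, hβ k]
    exact conjI_mono' (fun x => hmono j k hjk x) z
  have hγ : ∀ j, α j - β j ≤ (a - b) / 2 ^ j := by
    intro j
    induction j with
    | zero => simp [hα0, hβ0]
    | succ j ih =>
      have h1 := hβmono j (j + 1) (Nat.le_succ j)
      have h2 := hrec j
      have h3 : (a - b) / 2 ^ (j + 1) = ((a - b) / 2 ^ j) / 2 := by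
        rw [pow_succ]; ring
      rw [h2, h3]
      linarith
  -- the numeric bound
  have hab : 0 ≤ a - b := by have := hβα 0; rw [hα0, hβ0] at this; linarith
  have hεb : (a - b) / 2 ^ m0 ≤ ε := by
    rcases eq_or_lt_of_le hab with hq | hq
    · rw [← hq, zero_div]; exact hε.le
    · have hlog : Real.logb 2 ((a - b) / 2 ^ m0) = Real.logb 2 (a - b) - m0 := by
        rw [Real.logb_div (ne_of_gt hq) (by positivity), Real.logb_pow,
          Real.logb_self_eq_one (by norm_num)]
        ring
      have hlt : Real.logb 2 ((a - b) / 2 ^ m0) < Real.logb 2 ε := by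
        rw [hlog]; push_cast at hn; linarith
      exact le_of_lt ((Real.logb_lt_logb_iff (by norm_num) (by positivity) hε).mp hlt)
  have hfinal : ∀ m, ((α m0 - ε : ℝ) : EReal) ≤ G m z := by
    intro m
    rcases le_or_gt m m0 with hm | hm
    · calc ((α m0 - ε : ℝ) : EReal) ≤ ((α m0 : ℝ) : EReal) := by
            rw [EReal.coe_le_coe_iff]; linarith
        _ = G m0 z := hα m0
        _ ≤ G m z := hmono m m0 hm z
    · have h1 : α m0 - ε ≤ β m := by
        have e1 := hβmono m0 m hm.le
        have e2 := hγ m0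
        linarith
      calc ((α m0 - ε : ℝ) : EReal) ≤ ((β m : ℝ) : EReal) := by
            rw [EReal.coe_le_coe_iff]; exact h1
        _ = conjI (G m) z := hβ m
        _ ≤ G m z := (key m).2.2.1 z
  -- assemble
  have hAn : Amap^[m0 + 1] h z = ((α m0 : ℝ) : EReal) := by rw [hIter m0, ← hα m0]
  have hinf : AinfMap h z = ⨅ m, G m z := by
    unfold AinfMap
    exact iInf_congr fun m => by rw [hIter m]
  constructor
  · rw [hAn, hinf, ← EReal.coe_sub]
    exact le_iInf hfinal
  · rw [hAn, hinf]
    exact iInf_le_of_le m0 (le_of_eq (hα m0).symm)
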